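/- Let k be a field and Z a commutative k-algebra which possesses a k-basis (e_i)_{i∈I}, indexed by a finite set I, consisting of pairwise orthogonal idempotents summing to 1 (i.e., e_i·e_j = 0 for i ≠ j, e_i·e_i = e_i, and Σ_{i∈I} e_i = 1). Let z = Σ_{i∈I} a_i·e_i with a_i ∈ k. Then the k-subalgebra of Z generated by z (i.e., Algebra.adjoin k {z}) is all of Z if and only if the map i ↦ a_i is injective (z has simple spectrum). -/

import Mathlib

/-- If a commutative `k`-algebra `Z` has a finite `k`-basis `(e i)`
consisting of pairwise orthogonal idempotents summing to `1`, and `z = ∑ aᵢ • eᵢ`,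
then `z` generates `Z` as a `k`-algebra iff the spectrum `i ↦ aᵢ` is simple
(i.e. `a` is injective). -/
theorem stmt_1 {k : Type*} [Field k] {Z : Type*} [CommRing Z] [Algebra k Z]
    {I : Type*} [Fintype I] (e : Module.Basis I k Z)
    (horth : ∀ i j : I, i ≠ j → e i * e j = 0)
    (hidem : ∀ i : I, e i * e i = e i)
    (hsum : ∑ i : I, e i = 1)
    (a : I → k) (z : Z) (hz : z = ∑ i : I, a i • e i) :
    Algebra.adjoin k {z} = ⊤ ↔ Function.Injective a := by
  classical
  -- multiplication of two expansions in the basis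
  have hmul' : ∀ c d : I → k,
      (∑ l : I, c l • e l) * (∑ l : I, d l • e l) = ∑ l : I, (c l * d l) • e l := by
    intro c d
    rw [Finset.sum_mul_sum]
    refine Finset.sum_congr rfl fun i _ => ?_
    rw [Finset.sum_eq_single i]
    · rw [smul_mul_smul_comm, hidem]
    · intro j _ hji
      rw [smul_mul_smul_comm, horth i j (Ne.symm hji), smul_zero]
    · intro h; exact absurd (Finset.mem_univ i) h
  have hmul : ∀ x y : Z, x * y = ∑ l : I, (e.repr x l * e.repr y l) • e l := by
    intro x y
    conv_lhs => rw [← e.sum_repr x, ← e.sum_repr y]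
    exact hmul' _ _
  have hone : ∀ l : I, e.repr 1 l = 1 := by
    intro l
    have : (1 : Z) = ∑ i : I, (fun _ => (1:k)) i • e i := by simp [hsum]
    rw [this, e.repr_sum_self]
  have hrz : ∀ l : I, e.repr z l = a l := by
    intro l; rw [hz, e.repr_sum_self]
  constructor
  · -- adjoin = ⊤ → injective
    intro htop i j hij
    by_contra hne
    -- coordinate algebra homs
    have mkφ : ∀ m : I, ∃ φ : Z →ₐ[k] k, ∀ x, φ x = e.repr x m := by
      intro m
      refine ⟨{ toFun := fun x => e.repr x m,
                map_one' := hone m,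
                map_mul' := fun x y => ?_,
                map_zero' := by simp,
                map_add' := fun x y => by simp,
                commutes' := fun c => ?_ }, fun x => rfl⟩
      · show e.repr (x * y) m = e.repr x m * e.repr y m
        have h2 := congrFun (e.repr_sum_self (fun l => e.repr x l * e.repr y l)) m
        rw [hmul x y]
        exact h2
      · show e.repr (algebraMap k Z c) m = algebraMap k k c
        rw [Algebra.algebraMap_eq_smul_one, map_smul, Finsupp.smul_apply, hone m,
          smul_eq_mul, mul_one, Algebra.algebraMap_self_apply]
    obtain ⟨φi, hφi⟩ := mkφ i
    obtain ⟨φj, hφj⟩ := mkφ j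
    have hzeq : φi z = φj z := by rw [hφi, hφj, hrz, hrz, hij]
    have hle : Algebra.adjoin k {z} ≤ AlgHom.equalizer φi φj :=
      Algebra.adjoin_le (by rintro x rfl; exact hzeq)
    rw [htop, top_le_iff] at hle
    have : φi (e i) = φj (e i) := by
      have : e i ∈ AlgHom.equalizer φi φj := hle ▸ Algebra.mem_top
      exact this
    rw [hφi, hφj, e.repr_self, Finsupp.single_apply, Finsupp.single_apply] at this
    simp [hne] at this
  · -- injective → adjoin = ⊤
    intro ha
    have hei : ∀ i : I, e i ∈ Algebra.adjoin k {z} := by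
      intro i
      have hprod : ∀ s : Finset I,
          ∏ j ∈ s, (z - algebraMap k Z (a j)) = ∑ l : I, (∏ j ∈ s, (a l - a j)) • e l := by
        intro s
        induction s using Finset.induction_on with
        | empty => simp [hsum]
        | @insert i' s' hnotmem ih =>
          rw [Finset.prod_insert hnotmem, ih]
          have hz' : z - algebraMap k Z (a i') = ∑ l : I, (a l - a i') • e l := by
            rw [hz, Algebra.algebraMap_eq_smul_one, ← hsum, Finset.smul_sum,
              ← Finset.sum_sub_distrib]
            exact Finset.sum_congr rfl fun l _ => by rw [sub_smul]
          rw [hz', hmul' _ _]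
          exact Finset.sum_congr rfl fun l _ => by
            rw [Finset.prod_insert hnotmem, mul_comm]
      set c : k := ∏ j ∈ Finset.univ.erase i, (a i - a j) with hc
      have hcne : c ≠ 0 := by
        rw [hc]
        apply Finset.prod_ne_zero_iff.mpr
        intro j hj
        exact sub_ne_zero.mpr fun h => (Finset.mem_erase.mp hj).1 (ha h).symm
      have hP : ∏ j ∈ Finset.univ.erase i, (z - algebraMap k Z (a j)) = c • e i := by
        rw [hprod]
        rw [Finset.sum_eq_single i]
        · intro l _ hli
          have : ∏ j ∈ Finset.univ.erase i, (a l - a j) = 0 :=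
            Finset.prod_eq_zero (Finset.mem_erase.mpr ⟨hli, Finset.mem_univ l⟩) (sub_self _)
          rw [this, zero_smul]
        · intro h; exact absurd (Finset.mem_univ i) h
      have hPmem : ∏ j ∈ Finset.univ.erase i, (z - algebraMap k Z (a j)) ∈
          Algebra.adjoin k {z} := by
        apply Subalgebra.prod_mem
        intro j _
        exact sub_mem (Algebra.self_mem_adjoin_singleton k z) (Subalgebra.algebraMap_mem _ _)
      have : e i = c⁻¹ • (c • e i) := by rw [smul_smul, inv_mul_cancel₀ hcne, one_smul]
      rw [this, ← hP]
      exact Subalgebra.smul_mem _ hPmem _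
    rw [eq_top_iff]
    intro x _
    rw [← e.sum_repr x]
    exact Subalgebra.sum_mem _ fun i _ => Subalgebra.smul_mem _ (hei i) _
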